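/- Suppose F ⊆ ℕ has the property that there exists a J-set F′ ⊆ ℕ such that for every finite subset W of F′ there exists m ∈ ℤ₊ with m + W ⊆ F (i.e., F belongs to the block family of the J-sets). Then F is itself a J-set. -/
import Mathlib


open Finset

/-- `F ⊆ ℕ₊` is a J-set: for every `m ∈ ℕ` and every sequence `s : ℕ₊ → ℤ^m`
there exist `r ∈ ℕ₊` and a nonempty finite `α ⊆ ℕ₊` such that
`r + s_α i ∈ F` for every `i ∈ {1,…,m}`, where `s_α = ∑_{n∈α} s n`. -/
def IsJSet (F : Set ℕ+) : Prop :=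
  ∀ (m : ℕ) (s : ℕ+ → Fin m → ℤ),
    ∃ (r : ℕ+) (α : Finset ℕ+), α.Nonempty ∧
      ∀ i : Fin m, ∃ k ∈ F, ((k : ℕ) : ℤ) = ((r : ℕ) : ℤ) + ∑ n ∈ α, s n i

/-- If `F` belongs to the block family of the J-sets (there is a J-set `F'` such that
every finite `W ⊆ F'` has a nonnegative translate `m + W ⊆ F`), then `F` is a J-set. -/
theorem jset_block (F : Set ℕ+)
    (h : ∃ F' : Set ℕ+, IsJSet F' ∧
      ∀ W : Finset ℕ+, ↑W ⊆ F' → ∃ m : ℕ, ∀ w ∈ W, ∃ k ∈ F, (k : ℕ) = m + (w : ℕ)) :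
    IsJSet F := by
  obtain ⟨F', hF', hblock⟩ := h
  intro m s
  obtain ⟨r, α, hα, hr⟩ := hF' m s
  choose k hkF' hk using hr
  obtain ⟨m₀, hm₀⟩ := hblock (Finset.image k Finset.univ) (by
    intro x hx
    simp only [Finset.coe_image, Set.mem_image] at hx
    obtain ⟨i, _, rfl⟩ := hx
    exact hkF' i)
  refine ⟨⟨(r : ℕ) + m₀, by positivity⟩, α, hα, ?_⟩
  intro i
  obtain ⟨k', hk'F, hk'⟩ := hm₀ (k i) (Finset.mem_image_of_mem k (Finset.mem_univ i))
  refine ⟨k', hk'F, ?_⟩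
  have := hk i
  simp only [PNat.mk_coe]
  push_cast [hk']
  push_cast at this
  linarith
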